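/- For the Rindler metric ds² = -(1+aξ)²dτ² + dξ² + dy² + dz² (coordinates (τ,ξ,y,z), constant a > 0), the Landau–Lifshitz pseudotensor l^{μν} = -(1/g)∂_λ τ^{μνλ} with τ^{μνλ} = k ∂_ρ[(-g)(g^{μν}g^{ρλ} - g^{μρ}g^{νλ})] equals l^{μν} = k (g''/g)(δ^μ_2 δ^ν_2 + δ^μ_3 δ^ν_3), where g = -(1+aξ)² is the metric determinant and primes denote d/dξ. In particular its trace is l = g_{μν}l^{μν} = 2k g''/g, which is nonzero, and l^{00} = 0. -/

import Mathlib

/-- Partial derivative of a scalar field on ℝ⁴ along the ρ-th coordinate. -/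
noncomputable def pd (ρ : Fin 4) (F : (Fin 4 → ℝ) → ℝ) (x : Fin 4 → ℝ) : ℝ :=
  fderiv ℝ F x (Pi.single ρ 1)

/-- The Rindler metric function g(ξ) = -(1+aξ)², which is also the metric
determinant. -/
noncomputable def rindlerG (a ξ : ℝ) : ℝ := -(1 + a * ξ) ^ 2

/-- Inverse Rindler metric g^{μν} = diag(-(1+aξ)⁻², 1, 1, 1). -/
noncomputable def rindlerGinv (a : ℝ) (x : Fin 4 → ℝ) :
    Matrix (Fin 4) (Fin 4) ℝ :=
  Matrix.diagonal ![-(1 + a * x 1)⁻¹ ^ 2, 1, 1, 1]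

/-- Rindler metric (lower indices) g_{μν} = diag(-(1+aξ)², 1, 1, 1). -/
noncomputable def rindlerGlow (a : ℝ) (x : Fin 4 → ℝ) :
    Matrix (Fin 4) (Fin 4) ℝ :=
  Matrix.diagonal ![-(1 + a * x 1) ^ 2, 1, 1, 1]

/-- Landau–Lifshitz superpotential τ^{μνλ} for the Rindler metric. -/
noncomputable def rindlerTau (k a : ℝ) (μ ν lam : Fin 4) (x : Fin 4 → ℝ) : ℝ :=
  k * ∑ ρ, pd ρ (fun y => (-(rindlerG a (y 1))) *
      (rindlerGinv a y μ ν * rindlerGinv a y ρ lam -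
       rindlerGinv a y μ ρ * rindlerGinv a y ν lam)) x

/-- Landau–Lifshitz pseudotensor l^{μν} for the Rindler metric. -/
noncomputable def rindlerLL (k a : ℝ) (μ ν : Fin 4) (x : Fin 4 → ℝ) : ℝ :=
  -(rindlerG a (x 1))⁻¹ * ∑ lam, pd lam (rindlerTau k a μ ν lam) x





noncomputable def gi (a : ℝ) (μ ν : Fin 4) (s : ℝ) : ℝ :=
  if μ = ν then (if μ = 0 then -(1 + a * s)⁻¹ ^ 2 else 1) else 0

lemma ginv_eq (a : ℝ) (y : Fin 4 → ℝ) (μ ν : Fin 4) :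
    rindlerGinv a y μ ν = gi a μ ν (y 1) := by
  rcases eq_or_ne μ ν with h | h
  · subst h
    fin_cases μ <;> simp [rindlerGinv, gi, Matrix.diagonal_apply]
  · simp [rindlerGinv, gi, Matrix.diagonal_apply, h]

lemma pd_comp (h : ℝ → ℝ) (h' : ℝ) (ρ : Fin 4) (x : Fin 4 → ℝ)
    (hd : HasDerivAt h h' (x 1)) :
    pd ρ (fun y => h (y 1)) x = if ρ = 1 then h' else 0 := by
  have hp : HasFDerivAt (fun y : Fin 4 → ℝ => y 1)
      (ContinuousLinearMap.proj 1 : (Fin 4 → ℝ) →L[ℝ] ℝ) x :=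
    (ContinuousLinearMap.proj (R := ℝ) (φ := fun _ : Fin 4 => ℝ) 1).hasFDerivAt
  have hc : HasFDerivAt (fun y : Fin 4 → ℝ => h (y 1))
      (h' • (ContinuousLinearMap.proj (R := ℝ) (φ := fun _ : Fin 4 => ℝ) 1)) x :=
    hd.comp_hasFDerivAt x hp
  unfold pd
  rw [hc.fderiv]
  simp [Pi.single_apply, eq_comm]

lemma pd_congr (F G : (Fin 4 → ℝ) → ℝ) (ρ : Fin 4) (x : Fin 4 → ℝ)
    (h : F =ᶠ[nhds x] G) : pd ρ F x = pd ρ G x := by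
  unfold pd; rw [h.fderiv_eq]
noncomputable def gfun (a : ℝ) (μ ν ρ lam : Fin 4) (s : ℝ) : ℝ :=
  (1 + a * s) ^ 2 * (gi a μ ν s * gi a ρ lam s - gi a μ ρ s * gi a ν lam s)

lemma hasDerivAt_f (a s : ℝ) : HasDerivAt (fun t => 1 + a * t) a s := by
  exact (((hasDerivAt_id s).const_mul a).const_add 1).congr_deriv (mul_one a)

lemma hasDerivAt_f2 (a s : ℝ) :
    HasDerivAt (fun t => (1 + a * t) ^ 2) (2 * a * (1 + a * s)) s := by
  have := (hasDerivAt_f a s).fun_pow 2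
  exact this.congr_deriv (by norm_num; ring)

lemma eventually_ne (a s : ℝ) (hs : 1 + a * s ≠ 0) :
    ∀ᶠ t in nhds s, 1 + a * t ≠ 0 := by
  have hc : Continuous fun t : ℝ => 1 + a * t := by continuity
  exact hc.continuousAt.eventually_ne hs

lemma hasDerivAt_m1 (a s : ℝ) (hs : 1 + a * s ≠ 0) :
    HasDerivAt (fun t => (1 + a * t) ^ 2 * -(1 + a * t)⁻¹ ^ 2) 0 s := by
  have h : (fun _ : ℝ => (-1 : ℝ)) =ᶠ[nhds s]
      fun t => (1 + a * t) ^ 2 * -(1 + a * t)⁻¹ ^ 2 := by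
    filter_upwards [eventually_ne a s hs] with t ht
    field_simp
  exact (hasDerivAt_const s (-1)).congr_of_eventuallyEq h.symm

lemma gfun_hasDerivAt (a : ℝ) (μ ν ρ lam : Fin 4) (s : ℝ) (hs : 1 + a * s ≠ 0) :
    HasDerivAt (gfun a μ ν ρ lam)
      (2 * a * (1 + a * s) *
        ((if μ = ν ∧ ρ = lam ∧ μ ≠ 0 ∧ ρ ≠ 0 then 1 else 0) -
         (if μ = ρ ∧ ν = lam ∧ μ ≠ 0 ∧ ν ≠ 0 then 1 else 0))) s := by
  unfold gfun
  by_cases hA : μ = ν ∧ ρ = lam <;> by_cases hB : μ = ρ ∧ ν = lam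
  · -- all equal
    obtain ⟨h1, h2⟩ := hA; obtain ⟨h3, h4⟩ := hB
    subst h1; subst h3; subst h2
    simpa [sub_self] using hasDerivAt_const s (0 : ℝ)
  · -- A only
    obtain ⟨h1, h2⟩ := hA
    subst h1; subst h2
    by_cases hμρ : μ = ρ
    · exact absurd ⟨hμρ, hμρ⟩ hB
    by_cases hμ0 : μ = 0 <;> by_cases hρ0 : ρ = 0
    · exact absurd (hμ0.trans hρ0.symm) hμρ
    · -- μ = 0, ρ ≠ 0
      simp only [gi, if_neg hμρ, if_pos hμ0, if_neg hρ0, eq_self_iff_true, if_true,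
        mul_one, mul_zero, sub_zero]
      rw [if_neg (show ¬(True ∧ True ∧ μ ≠ 0 ∧ ρ ≠ 0) by simp [hμ0]),
        if_neg (show ¬(μ = ρ ∧ μ = ρ ∧ μ ≠ 0 ∧ μ ≠ 0) by simp [hμρ])]
      simpa using hasDerivAt_m1 a s hs
    · -- μ ≠ 0, ρ = 0
      simp only [gi, if_neg hμρ, if_neg hμ0, if_pos hρ0, eq_self_iff_true, if_true,
        one_mul, mul_zero, sub_zero]
      rw [if_neg (show ¬(True ∧ True ∧ μ ≠ 0 ∧ ρ ≠ 0) by simp [hρ0]),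
        if_neg (show ¬(μ = ρ ∧ μ = ρ ∧ μ ≠ 0 ∧ μ ≠ 0) by simp [hμρ])]
      simpa using hasDerivAt_m1 a s hs
    · -- neither zero
      simp only [gi, if_neg hμρ, if_neg hμ0, if_neg hρ0, eq_self_iff_true, if_true,
        one_mul, mul_zero, sub_zero, mul_one]
      rw [if_pos (show (True ∧ True ∧ μ ≠ 0 ∧ ρ ≠ 0) by simp [hμ0, hρ0]),
        if_neg (show ¬(μ = ρ ∧ μ = ρ ∧ μ ≠ 0 ∧ μ ≠ 0) by simp [hμρ])]
      simpa using hasDerivAt_f2 a s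
  · -- B only
    obtain ⟨h3, h4⟩ := hB
    subst h3; subst h4
    by_cases hμν : μ = ν
    · exact absurd ⟨hμν, hμν⟩ hA
    by_cases hμ0 : μ = 0 <;> by_cases hν0 : ν = 0
    · exact absurd (hμ0.trans hν0.symm) hμν
    · simp only [gi, if_neg hμν, if_pos hμ0, if_neg hν0, eq_self_iff_true, if_true,
        mul_one, zero_mul, zero_sub, mul_neg]
      rw [if_neg (show ¬(True ∧ True ∧ μ ≠ 0 ∧ ν ≠ 0) by simp [hμ0])]
      simpa [hμν] using (hasDerivAt_m1 a s hs).fun_neg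
    · simp only [gi, if_neg hμν, if_neg hμ0, if_pos hν0, eq_self_iff_true, if_true,
        one_mul, zero_mul, zero_sub, mul_neg]
      rw [if_neg (show ¬(True ∧ True ∧ μ ≠ 0 ∧ ν ≠ 0) by simp [hν0])]
      simpa [hμν] using (hasDerivAt_m1 a s hs).fun_neg
    · simp only [gi, if_neg hμν, if_neg hμ0, if_neg hν0, eq_self_iff_true, if_true,
        one_mul, zero_mul, zero_sub, mul_one, mul_neg]
      rw [if_pos (show (True ∧ True ∧ μ ≠ 0 ∧ ν ≠ 0) by simp [hμ0, hν0])]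
      simpa [hμν] using (hasDerivAt_f2 a s).fun_neg
  · -- neither
    have hz1 : ∀ t, gi a μ ν t * gi a ρ lam t = 0 := by
      intro t
      rcases not_and_or.mp hA with h | h <;> simp [gi, h]
    have hz2 : ∀ t, gi a μ ρ t * gi a ν lam t = 0 := by
      intro t
      rcases not_and_or.mp hB with h | h <;> simp [gi, h]
    have hcA : ¬(μ = ν ∧ ρ = lam ∧ μ ≠ 0 ∧ ρ ≠ 0) := fun h => hA ⟨h.1, h.2.1⟩
    have hcB : ¬(μ = ρ ∧ ν = lam ∧ μ ≠ 0 ∧ ν ≠ 0) := fun h => hB ⟨h.1, h.2.1⟩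
    rw [if_neg hcA, if_neg hcB]
    simp only [hz1, hz2, sub_self, mul_zero, sub_zero]
    simpa using hasDerivAt_const s (0 : ℝ)

lemma tau_eq (k a : ℝ) (μ ν lam : Fin 4) (y : Fin 4 → ℝ) (hy : 1 + a * y 1 ≠ 0) :
    rindlerTau k a μ ν lam y =
      2 * k * a * (1 + a * y 1) *
        ((if μ = ν ∧ lam = 1 ∧ μ ≠ 0 then 1 else 0) -
         (if μ = 1 ∧ ν = lam ∧ ν ≠ 0 then 1 else 0)) := by
  have hinner : ∀ ρ : Fin 4,
      (fun y' => -(rindlerG a (y' 1)) * (rindlerGinv a y' μ ν * rindlerGinv a y' ρ lam -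
        rindlerGinv a y' μ ρ * rindlerGinv a y' ν lam)) = fun y' => gfun a μ ν ρ lam (y' 1) := by
    intro ρ; funext y'; simp [gfun, rindlerG, ginv_eq]
  unfold rindlerTau
  rw [Fin.sum_univ_four]
  rw [hinner 0, hinner 1, hinner 2, hinner 3]
  rw [pd_comp _ _ _ _ (gfun_hasDerivAt a μ ν 0 lam (y 1) hy),
      pd_comp _ _ _ _ (gfun_hasDerivAt a μ ν 1 lam (y 1) hy),
      pd_comp _ _ _ _ (gfun_hasDerivAt a μ ν 2 lam (y 1) hy),
      pd_comp _ _ _ _ (gfun_hasDerivAt a μ ν 3 lam (y 1) hy)]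
  norm_num
  by_cases h1 : μ = ν <;> by_cases h2 : lam = 1 <;> by_cases h3 : μ = 0 <;>
    by_cases h4 : μ = 1 <;> by_cases h5 : ν = lam <;> by_cases h6 : ν = 0 <;>
    simp_all <;> try ring
  all_goals (intro h; exact absurd h.symm h2)

lemma pd_tau (k a : ℝ) (μ ν lam : Fin 4) (x : Fin 4 → ℝ) (hx : 0 < 1 + a * x 1) :
    pd lam (rindlerTau k a μ ν lam) x =
      if lam = 1 then 2 * k * a * a *
        ((if μ = ν ∧ lam = 1 ∧ μ ≠ 0 then 1 else 0) -
         (if μ = 1 ∧ ν = lam ∧ ν ≠ 0 then 1 else 0)) else 0 := by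
  set c : ℝ := (if μ = ν ∧ lam = 1 ∧ μ ≠ 0 then 1 else 0) -
    (if μ = 1 ∧ ν = lam ∧ ν ≠ 0 then 1 else 0) with hc
  have hev : rindlerTau k a μ ν lam =ᶠ[nhds x] fun y => 2 * k * a * (1 + a * y 1) * c := by
    have hcont : Continuous fun y : Fin 4 → ℝ => 1 + a * y 1 :=
      continuous_const.add (continuous_const.mul (continuous_apply 1))
    have hopen : IsOpen {y : Fin 4 → ℝ | 0 < 1 + a * y 1} :=
      isOpen_lt continuous_const hcont
    filter_upwards [hopen.mem_nhds hx] with y hy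
    exact tau_eq k a μ ν lam y (ne_of_gt hy)
  rw [pd_congr _ _ _ _ hev]
  have hd : HasDerivAt (fun s : ℝ => 2 * k * a * (1 + a * s) * c) (2 * k * a * a * c) (x 1) := by
    have := ((hasDerivAt_f a (x 1)).const_mul (2 * k * a)).mul_const c
    convert this using 1 <;> ring
  exact pd_comp _ _ _ _ hd

lemma LL_eq (k a : ℝ) (μ ν : Fin 4) (x : Fin 4 → ℝ) (hx : 0 < 1 + a * x 1) :
    rindlerLL k a μ ν x = ((1 + a * x 1) ^ 2)⁻¹ * (2 * k * a * a) *
      (if (μ = 2 ∧ ν = 2) ∨ (μ = 3 ∧ ν = 3) then 1 else 0) := by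
  unfold rindlerLL
  rw [Fin.sum_univ_four, pd_tau k a μ ν 0 x hx, pd_tau k a μ ν 1 x hx,
    pd_tau k a μ ν 2 x hx, pd_tau k a μ ν 3 x hx]
  have hg : -(rindlerG a (x 1))⁻¹ = ((1 + a * x 1) ^ 2)⁻¹ := by
    simp [rindlerG, inv_neg]
  rw [hg]
  fin_cases μ <;> fin_cases ν <;> simp <;> try ring

lemma derivG (a : ℝ) : deriv (rindlerG a) = fun s => -(2 * a * (1 + a * s)) := by
  funext s
  have h : HasDerivAt (rindlerG a) (-(2 * a * (1 + a * s))) s := by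
    exact (hasDerivAt_f2 a s).fun_neg
  exact h.deriv

lemma deriv2G (a : ℝ) (s : ℝ) : deriv (deriv (rindlerG a)) s = -(2 * a * a) := by
  rw [derivG]
  have h : HasDerivAt (fun t : ℝ => -(2 * a * (1 + a * t))) (-(2 * a * a)) s := by
    have := ((hasDerivAt_f a s).const_mul (2 * a)).fun_neg
    convert this using 1 <;> ring
  exact h.deriv

/-- For Rindler spacetime, the Landau–Lifshitz pseudotensor equals
l^{μν} = k (g''/g)(δ^μ_2 δ^ν_2 + δ^μ_3 δ^ν_3); its trace l = 2k g''/g is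
nonzero (for a ≠ 0, k ≠ 0) and l^{00} = 0. -/
theorem rindler_landau_lifshitz (k a : ℝ) (hk : k ≠ 0) (ha : 0 < a)
    (x : Fin 4 → ℝ) (hx : 0 < 1 + a * x 1) :
    (∀ μ ν, rindlerLL k a μ ν x =
      k * (deriv (deriv (rindlerG a)) (x 1) / rindlerG a (x 1)) *
        ((if μ = 2 then (1:ℝ) else 0) * (if ν = 2 then (1:ℝ) else 0) +
         (if μ = 3 then (1:ℝ) else 0) * (if ν = 3 then (1:ℝ) else 0))) ∧
    (∑ μ, ∑ ν, rindlerGlow a x μ ν * rindlerLL k a μ ν x) =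
      2 * k * (deriv (deriv (rindlerG a)) (x 1) / rindlerG a (x 1)) ∧
    (∑ μ, ∑ ν, rindlerGlow a x μ ν * rindlerLL k a μ ν x) ≠ 0 ∧
    rindlerLL k a 0 0 x = 0 := by
  have hf : (1 + a * x 1) ≠ 0 := ne_of_gt hx
  have hratio : deriv (deriv (rindlerG a)) (x 1) / rindlerG a (x 1) =
      2 * a * a * ((1 + a * x 1) ^ 2)⁻¹ := by
    rw [deriv2G]
    simp only [rindlerG]
    field_simp
  have h1 : ∀ μ ν, rindlerLL k a μ ν x =
      k * (deriv (deriv (rindlerG a)) (x 1) / rindlerG a (x 1)) *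
        ((if μ = 2 then (1:ℝ) else 0) * (if ν = 2 then (1:ℝ) else 0) +
         (if μ = 3 then (1:ℝ) else 0) * (if ν = 3 then (1:ℝ) else 0)) := by
    intro μ ν
    rw [LL_eq k a μ ν x hx, hratio]
    fin_cases μ <;> fin_cases ν <;> simp <;> try ring
  have htr : (∑ μ, ∑ ν, rindlerGlow a x μ ν * rindlerLL k a μ ν x) =
      2 * k * (deriv (deriv (rindlerG a)) (x 1) / rindlerG a (x 1)) := by
    have hLL : ∀ μ ν, rindlerLL k a μ ν x = ((1 + a * x 1) ^ 2)⁻¹ * (2 * k * a * a) *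
        (if (μ = 2 ∧ ν = 2) ∨ (μ = 3 ∧ ν = 3) then 1 else 0) := fun μ ν => LL_eq k a μ ν x hx
    rw [Fin.sum_univ_four]
    simp only [Fin.sum_univ_four, hLL, hratio]
    simp [rindlerGlow, Matrix.diagonal_apply]
    field_simp
    ring
  refine ⟨h1, htr, ?_, ?_⟩
  · rw [htr, hratio]
    have : (2:ℝ) * k * (2 * a * a * ((1 + a * x 1) ^ 2)⁻¹) ≠ 0 := by
      apply mul_ne_zero
      apply mul_ne_zero two_ne_zero hk
      apply mul_ne_zero
      apply mul_ne_zero (mul_ne_zero two_ne_zero (ne_of_gt ha)) (ne_of_gt ha)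
      exact inv_ne_zero (pow_ne_zero _ hf)
    exact this
  · rw [h1 0 0]; simp
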